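/- Let S = {u_1, ..., u_n} ⊂ ℝ^p be a set of n ≥ 3 distinct points and let u, y ∈ S be a diameter pair, i.e. ‖u − y‖ = max_{1 ≤ i, j ≤ n} ‖u_i − u_j‖. Set v = (y − u)/‖y − u‖. Then at least one of the following holds: (1/n) · Σ_{i : u_i ≠ u} ⟨(u_i − u)/‖u_i − u‖, v⟩ ≥ 1/2, or (1/n) · Σ_{i : u_i ≠ y} ⟨(u_i − y)/‖u_i − y‖, −v⟩ ≥ 1/2. -/

import Mathlib

open scoped RealInnerProductSpace

private lemma diameter_aux {p : ℕ} (ua ub x : EuclideanSpace ℝ (Fin p))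
    (hxa : x ≠ ua) (hxb : x ≠ ub)
    (h1 : ‖x - ua‖ ≤ ‖ub - ua‖) (h2 : ‖x - ub‖ ≤ ‖ub - ua‖) :
    1 ≤ ⟪‖x - ua‖⁻¹ • (x - ua), ‖ub - ua‖⁻¹ • (ub - ua)⟫ +
        ⟪‖x - ub‖⁻¹ • (x - ub), -(‖ub - ua‖⁻¹ • (ub - ua))⟫ := by
  set d : ℝ := ‖ub - ua‖ with hd_def
  have hna : 0 < ‖x - ua‖ := by simpa [sub_eq_zero] using hxa
  have hnb : 0 < ‖x - ub‖ := by simpa [sub_eq_zero] using hxb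
  have hd : 0 < d := lt_of_lt_of_le hna h1
  set A : ℝ := ⟪x - ua, ub - ua⟫ with hA_def
  set B : ℝ := ⟪x - ub, ua - ub⟫ with hB_def
  have hAB : A + B = d ^ 2 := by
    rw [hA_def, hB_def, hd_def, ← real_inner_self_eq_norm_sq]
    simp only [inner_sub_left, inner_sub_right]
    ring
  have hcA : A ≤ ‖x - ua‖ * d := by
    simpa [hd_def] using real_inner_le_norm (x - ua) (ub - ua)
  have hcB : B ≤ ‖x - ub‖ * d := by
    have := real_inner_le_norm (x - ub) (ua - ub)
    simpa [hd_def, norm_sub_rev ua ub] using this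
  have hA0 : 0 ≤ A := by nlinarith
  have hB0 : 0 ≤ B := by nlinarith
  have hinv1 : d⁻¹ ≤ ‖x - ua‖⁻¹ := by
    apply inv_anti₀ hna h1
  have hinv2 : d⁻¹ ≤ ‖x - ub‖⁻¹ := by
    apply inv_anti₀ hnb h2
  have e1 : d⁻¹ * (d⁻¹ * A) ≤ ‖x - ua‖⁻¹ * (d⁻¹ * A) := by
    apply mul_le_mul_of_nonneg_right hinv1
    positivity
  have e2 : d⁻¹ * (d⁻¹ * B) ≤ ‖x - ub‖⁻¹ * (d⁻¹ * B) := by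
    apply mul_le_mul_of_nonneg_right hinv2
    positivity
  have e3 : d⁻¹ * (d⁻¹ * A) + d⁻¹ * (d⁻¹ * B) = 1 := by
    field_simp
    nlinarith [hAB]
  have t1 : ⟪‖x - ua‖⁻¹ • (x - ua), d⁻¹ • (ub - ua)⟫ = ‖x - ua‖⁻¹ * (d⁻¹ * A) := by
    rw [real_inner_smul_left, real_inner_smul_right]
  have t2 : ⟪‖x - ub‖⁻¹ • (x - ub), -(d⁻¹ • (ub - ua))⟫ = ‖x - ub‖⁻¹ * (d⁻¹ * B) := by
    rw [inner_neg_right, real_inner_smul_left, real_inner_smul_right, hB_def,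
      show ua - ub = -(ub - ua) by abel, inner_neg_right]
    ring
  rw [t1, t2]
  linarith

/-- For `n ≥ 3` distinct points `u 1, …, u n` and a diameter pair `u a, u b`
(realizing the maximum pairwise distance), with `v = (u b − u a)/‖u b − u a‖`,
either the average projected direction viewed from `u a` towards `v` is at least `1/2`,
or the average projected direction viewed from `u b` towards `−v` is at least `1/2`. -/
theorem diameter_pair_vantage {p n : ℕ} (hn : 3 ≤ n)
    (u : Fin n → EuclideanSpace ℝ (Fin p)) (hu : Function.Injective u)
    (a b : Fin n)
    (hdiam : ∀ i j, ‖u i - u j‖ ≤ ‖u a - u b‖) :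
    (1 : ℝ) / (n : ℝ) *
        ∑ i ∈ Finset.univ.erase a,
          ⟪‖u i - u a‖⁻¹ • (u i - u a), ‖u b - u a‖⁻¹ • (u b - u a)⟫ ≥ 1 / 2 ∨
    (1 : ℝ) / (n : ℝ) *
        ∑ i ∈ Finset.univ.erase b,
          ⟪‖u i - u b‖⁻¹ • (u i - u b), -(‖u b - u a‖⁻¹ • (u b - u a))⟫ ≥ 1 / 2 := by
  classical
  set d : ℝ := ‖u b - u a‖ with hd_def
  have hdrev : ‖u a - u b‖ = d := by rw [hd_def, norm_sub_rev]
  have hab : a ≠ b := by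
    intro h
    have hij : (⟨0, by omega⟩ : Fin n) ≠ ⟨1, by omega⟩ := by simp [Fin.ext_iff]
    have h0 := hdiam ⟨0, by omega⟩ ⟨1, by omega⟩
    rw [h, sub_self, norm_zero] at h0
    have : u ⟨0, by omega⟩ = u ⟨1, by omega⟩ := by
      have := norm_nonneg (u (⟨0, by omega⟩ : Fin n) - u ⟨1, by omega⟩)
      have hz : ‖u (⟨0, by omega⟩ : Fin n) - u ⟨1, by omega⟩‖ = 0 := le_antisymm h0 this
      rwa [norm_eq_zero, sub_eq_zero] at hz
    exact hij (hu this)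
  have huab : u a ≠ u b := fun h => hab (hu h)
  have hd : 0 < d := by
    rw [hd_def]
    simpa [sub_eq_zero] using (Ne.symm huab)
  set f : Fin n → ℝ := fun i => ⟪‖u i - u a‖⁻¹ • (u i - u a), d⁻¹ • (u b - u a)⟫ with hf
  set g : Fin n → ℝ := fun i => ⟪‖u i - u b‖⁻¹ • (u i - u b), -(d⁻¹ • (u b - u a))⟫ with hg
  have hbmem : b ∈ Finset.univ.erase a := Finset.mem_erase.mpr ⟨hab.symm, Finset.mem_univ b⟩
  have hamem : a ∈ Finset.univ.erase b := Finset.mem_erase.mpr ⟨hab, Finset.mem_univ a⟩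
  set T : Finset (Fin n) := (Finset.univ.erase a).erase b with hT
  have hS1 : ∑ i ∈ Finset.univ.erase a, f i = f b + ∑ i ∈ T, f i :=
    (Finset.add_sum_erase _ f hbmem).symm
  have hS2 : ∑ i ∈ Finset.univ.erase b, g i = g a + ∑ i ∈ T, g i := by
    have hcomm : T = (Finset.univ.erase b).erase a := by
      rw [hT]; ext x; simp only [Finset.mem_erase, Finset.mem_univ, and_true]; tauto
    rw [hcomm]
    exact (Finset.add_sum_erase _ g hamem).symm
  have hfb : f b = 1 := by
    show (⟪‖u b - u a‖⁻¹ • (u b - u a), d⁻¹ • (u b - u a)⟫ : ℝ) = 1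
    rw [real_inner_smul_left, real_inner_smul_right, real_inner_self_eq_norm_sq, ← hd_def]
    field_simp
  have hga : g a = 1 := by
    show (⟪‖u a - u b‖⁻¹ • (u a - u b), -(d⁻¹ • (u b - u a))⟫ : ℝ) = 1
    rw [inner_neg_right, real_inner_smul_left, real_inner_smul_right,
      show (⟪u a - u b, u b - u a⟫ : ℝ) = - ⟪u a - u b, u a - u b⟫ by
        rw [show u b - u a = -(u a - u b) by abel, inner_neg_right],
      real_inner_self_eq_norm_sq, hdrev]
    field_simp
  have hTcard : (T.card : ℝ) = (n : ℝ) - 2 := by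
    have : T.card = n - 2 := by
      rw [hT, Finset.card_erase_of_mem hbmem, Finset.card_erase_of_mem (Finset.mem_univ a),
        Finset.card_univ, Fintype.card_fin]
      omega
    rw [this]
    have : (2 : ℕ) ≤ n := by omega
    push_cast [Nat.cast_sub this]
    ring
  have hTsum : (T.card : ℝ) * 1 ≤ ∑ i ∈ T, (f i + g i) := by
    rw [show ((T.card : ℝ) * 1) = ∑ _i ∈ T, (1 : ℝ) by rw [Finset.sum_const, nsmul_eq_mul]]
    apply Finset.sum_le_sum
    intro i hi
    have hia : i ≠ a := Finset.mem_erase.mp (Finset.mem_of_mem_erase hi) |>.1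
    have hib : i ≠ b := Finset.mem_erase.mp hi |>.1
    have hxa : u i ≠ u a := fun h => hia (hu h)
    have hxb : u i ≠ u b := fun h => hib (hu h)
    have hd1 : ‖u i - u a‖ ≤ d := by rw [← hdrev]; exact hdiam i a
    have hd2 : ‖u i - u b‖ ≤ d := by
      have := hdiam i b
      rwa [hdrev] at this
    exact diameter_aux (u a) (u b) (u i) hxa hxb hd1 hd2
  have hsum : (n : ℝ) ≤ (∑ i ∈ Finset.univ.erase a, f i) + ∑ i ∈ Finset.univ.erase b, g i := by
    rw [hS1, hS2, hfb, hga]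
    rw [Finset.sum_add_distrib] at hTsum
    linarith [hTsum, hTcard]
  have hn0 : (0 : ℝ) < n := by
    have : (3 : ℝ) ≤ (n : ℝ) := by exact_mod_cast hn
    linarith
  rcases le_or_gt ((n : ℝ) / 2) (∑ i ∈ Finset.univ.erase a, f i) with h | h
  · left
    rw [ge_iff_le, show (1 : ℝ) / (n : ℝ) * (∑ i ∈ Finset.univ.erase a, f i)
        = (∑ i ∈ Finset.univ.erase a, f i) / n by ring, le_div_iff₀ hn0]
    linarith
  · right
    have h2 : (n : ℝ) / 2 ≤ ∑ i ∈ Finset.univ.erase b, g i := by linarith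
    rw [ge_iff_le, show (1 : ℝ) / (n : ℝ) * (∑ i ∈ Finset.univ.erase b, g i)
        = (∑ i ∈ Finset.univ.erase b, g i) / n by ring, le_div_iff₀ hn0]
    linarith
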